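/- Let d ∈ [0,n], S ⊂ ℝⁿ closed with d-regular system of measures {μ_k}, and for r > 0 let k(r) be the unique integer with r ∈ [2^{-k(r)}, 2^{-k(r)+1}). Then there exists C > 0 such that for every x ∈ S, r ∈ (0,1), and every Borel set G ⊂ Q(x,r) ∩ S: L_n(G)/L_n(Q(x,r)) ≤ C · μ_{k(r)}(G)/μ_{k(r)}(Q(x,r) ∩ S). -/

import Mathlib

open Metric Set MeasureTheory
open scoped ENNReal NNReal

/-- A `d`-regular system of measures on `S` with constants `C₁, C₂`:
Borel measures `μ_k` supported in `S` such that
(1) `μ_k(B(x,r)) ≤ C₁ r^d` for all `x ∈ ℝⁿ`, `r ∈ (0, 2^{-k}]`;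
(2) `μ_k(B(x, 2^{-k})) ≥ C₂ 2^{-kd}` for all `x ∈ S`;
(3) `2^{d−n} μ_{k+1}(G) ≤ μ_k(G) ≤ μ_{k+1}(G)` for every Borel `G ⊆ S`. -/
def IsDRegularSystem (n : ℕ) (d : ℝ) (S : Set (Fin n → ℝ))
    (μ : ℕ → Measure (Fin n → ℝ)) (C₁ C₂ : ℝ) : Prop :=
  (∀ k, μ k Sᶜ = 0) ∧
  (∀ k : ℕ, ∀ x : Fin n → ℝ, ∀ r : ℝ, 0 < r → r ≤ (2:ℝ)^(-(k:ℤ)) →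
      μ k (closedBall x r) ≤ ENNReal.ofReal (C₁ * r ^ d)) ∧
  (∀ k : ℕ, ∀ x ∈ S,
      ENNReal.ofReal (C₂ * ((2:ℝ)^(-(k:ℤ))) ^ d) ≤ μ k (closedBall x ((2:ℝ)^(-(k:ℤ))))) ∧
  (∀ k : ℕ, ∀ G ⊆ S, MeasurableSet G →
      ENNReal.ofReal ((2:ℝ) ^ (d - n)) * μ (k+1) G ≤ μ k G ∧ μ k G ≤ μ (k+1) G)

section Aux

variable {n : ℕ} {d : ℝ} {S : Set (Fin n → ℝ)} {μ : ℕ → Measure (Fin n → ℝ)} {C₁ C₂ : ℝ}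

/-- `μ k` is carried by `S`. -/
lemma DReg.support_eq (h0 : ∀ k, μ k Sᶜ = 0) (k : ℕ) (A : Set (Fin n → ℝ)) :
    μ k (A ∩ S) = μ k A := by
  refine le_antisymm (measure_mono inter_subset_left) ?_
  calc μ k A ≤ μ k ((A ∩ S) ∪ Sᶜ) := by
        refine measure_mono fun y hy => ?_
        by_cases h : y ∈ S
        · exact Or.inl ⟨hy, h⟩
        · exact Or.inr h
    _ ≤ μ k (A ∩ S) + μ k Sᶜ := measure_union_le _ _
    _ = μ k (A ∩ S) := by rw [h0 k, add_zero]

lemma DReg.chainUp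
    (h3 : ∀ k : ℕ, ∀ G ⊆ S, MeasurableSet G →
      ENNReal.ofReal ((2:ℝ) ^ (d - n)) * μ (k+1) G ≤ μ k G ∧ μ k G ≤ μ (k+1) G)
    (k m : ℕ) (G : Set (Fin n → ℝ)) (hGS : G ⊆ S) (hGm : MeasurableSet G) :
    μ (k+m) G ≤ ENNReal.ofReal ((2:ℝ)^((n:ℝ)-d)) ^ m * μ k G := by
  induction m with
  | zero => simp
  | succ m ih =>
    have step := (h3 (k+m) G hGS hGm).1
    have hmul : (ENNReal.ofReal ((2:ℝ)^((n:ℝ)-d)) * ENNReal.ofReal ((2:ℝ)^(d-(n:ℝ)))) = 1 := by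
      rw [← ENNReal.ofReal_mul (by positivity), ← Real.rpow_add two_pos]
      norm_num
    have h1 : μ (k+m+1) G ≤ ENNReal.ofReal ((2:ℝ)^((n:ℝ)-d)) * μ (k+m) G := by
      calc μ (k+m+1) G = (ENNReal.ofReal ((2:ℝ)^((n:ℝ)-d)) * ENNReal.ofReal ((2:ℝ)^(d-(n:ℝ))))
            * μ (k+m+1) G := by rw [hmul, one_mul]
        _ = ENNReal.ofReal ((2:ℝ)^((n:ℝ)-d)) *
            (ENNReal.ofReal ((2:ℝ)^(d-(n:ℝ))) * μ (k+m+1) G) := by rw [mul_assoc]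
        _ ≤ ENNReal.ofReal ((2:ℝ)^((n:ℝ)-d)) * μ (k+m) G := by
            exact mul_le_mul_right step _
    calc μ (k+(m+1)) G = μ (k+m+1) G := by ring_nf
      _ ≤ ENNReal.ofReal ((2:ℝ)^((n:ℝ)-d)) * μ (k+m) G := h1
      _ ≤ ENNReal.ofReal ((2:ℝ)^((n:ℝ)-d)) * (ENNReal.ofReal ((2:ℝ)^((n:ℝ)-d)) ^ m * μ k G) :=
          mul_le_mul_right ih _
      _ = ENNReal.ofReal ((2:ℝ)^((n:ℝ)-d)) ^ (m+1) * μ k G := by ring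

/-- `μ j` of a unit ball is finite. -/
lemma DReg.ball_one_lt_top (hS : IsClosed S) (hreg : IsDRegularSystem n d S μ C₁ C₂)
    (j : ℕ) (x : Fin n → ℝ) : μ j (closedBall x 1) ≠ ∞ := by
  obtain ⟨h0, h1, h2, h3⟩ := hreg
  have e1 : μ j (closedBall x 1) = μ j (closedBall x 1 ∩ S) := (DReg.support_eq h0 _ _).symm
  have e2 : μ j (closedBall x 1 ∩ S)
      ≤ ENNReal.ofReal ((2:ℝ)^((n:ℝ)-d)) ^ j * μ 0 (closedBall x 1 ∩ S) := by
    simpa using DReg.chainUp h3 0 j (closedBall x 1 ∩ S) inter_subset_right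
      ((measurableSet_closedBall).inter hS.measurableSet)
  have e3 : μ 0 (closedBall x 1 ∩ S) ≤ ENNReal.ofReal (C₁ * (1:ℝ) ^ d) := by
    refine le_trans (measure_mono inter_subset_left) ?_
    have := h1 0 x 1 one_pos (by norm_num)
    simpa using this
  refine ne_top_of_le_ne_top ?_ (e1.le.trans (e2.trans (mul_le_mul_right e3 _)))
  exact ENNReal.mul_ne_top (by simp [ENNReal.pow_ne_top]) ENNReal.ofReal_ne_top

/-- Key estimate for compact subsets of `S`. -/
lemma DReg.key_compact (hd0 : 0 ≤ d) (hdn : d ≤ n) (hS : IsClosed S)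
    (hC₁ : 0 < C₁) (hC₂ : 0 < C₂) (hreg : IsDRegularSystem n d S μ C₁ C₂)
    (x : Fin n → ℝ) (r : ℝ) (hr0 : 0 < r) (hr1 : r < 1)
    (K : Set (Fin n → ℝ)) (hKc : IsCompact K) (hKS : K ⊆ S) (hKx : K ⊆ closedBall x r) (k : ℕ) :
    volume K ≤ ENNReal.ofReal ((2:ℝ)^n/C₂ * (2:ℝ)^((d-(n:ℝ))*k)) * μ k K := by
  have hfin1 := DReg.ball_one_lt_top hS hreg
  obtain ⟨h0, h1, h2, h3⟩ := hreg
  obtain ⟨j₁, hj₁⟩ : ∃ j₁ : ℕ, (2:ℝ)^(-(j₁:ℤ)) < 1 - r := by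
    obtain ⟨m, hm⟩ := exists_pow_lt_of_lt_one (by linarith : (0:ℝ) < 1 - r)
      (by norm_num : (1:ℝ)/2 < 1)
    exact ⟨m, by rwa [zpow_neg, zpow_natCast, ← inv_pow, ← one_div]⟩
  set c : ℝ≥0∞ := ENNReal.ofReal ((2:ℝ)^n/C₂ * (2:ℝ)^((d-(n:ℝ))*k)) with hc
  set B := closedBall x (1:ℝ) with hB
  have hsubB : ∀ j : ℕ, j₁ ≤ j → cthickening ((2:ℝ)^(-(j:ℤ))) K ⊆ B := by
    intro j hj
    have hρ1r : (2:ℝ)^(-(j:ℤ)) ≤ 1 - r :=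
      le_of_lt (lt_of_le_of_lt (zpow_le_zpow_right₀ one_le_two (by omega)) hj₁)
    refine subset_trans ?_ (closedBall_subset_closedBall (by linarith : r + (2:ℝ)^(-(j:ℤ)) ≤ 1))
    rw [add_comm, ← cthickening_closedBall (by positivity) hr0.le x]
    exact cthickening_subset_of_subset _ hKx
  have step : ∀ j : ℕ, k ≤ j → j₁ ≤ j →
      volume K ≤ c * μ k (cthickening ((2:ℝ)^(-(j:ℤ))) K) := by
    intro j hkj hj₁j
    set ρ : ℝ := (2:ℝ)^(-(j:ℤ)) with hρdef
    have hρ0 : 0 < ρ := by positivity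
    set T := cthickening ρ K with hT
    have hTmeas : MeasurableSet T := isClosed_cthickening.measurableSet
    have hTB : T ⊆ B := hsubB j hj₁j
    have hρ1r : ρ ≤ 1 - r :=
      le_of_lt (lt_of_le_of_lt (zpow_le_zpow_right₀ one_le_two (by omega)) hj₁)
    set ν := (μ j).restrict B with hν
    haveI hνfin : IsFiniteMeasure ν := by
      constructor
      rw [hν, Measure.restrict_apply_univ]
      exact lt_top_iff_ne_top.2 (hfin1 j x)
    set A : Set ((Fin n → ℝ) × (Fin n → ℝ)) := {p | p.1 ∈ K ∧ dist p.1 p.2 ≤ ρ} with hA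
    have hAmeas : MeasurableSet A := by
      have hAeq : A = (K ×ˢ (univ : Set (Fin n → ℝ))) ∩ {p | dist p.1 p.2 ≤ ρ} := by
        ext p; simp [hA]
      rw [hAeq]
      exact (hKc.measurableSet.prod MeasurableSet.univ).inter
        ((isClosed_le (continuous_fst.dist continuous_snd) continuous_const).measurableSet)
    set f : (Fin n → ℝ) → (Fin n → ℝ) → ℝ≥0∞ := fun y z => A.indicator 1 (y, z) with hf
    have hswap : ∫⁻ y, ∫⁻ z, f y z ∂ν ∂volume = ∫⁻ z, ∫⁻ y, f y z ∂volume ∂ν := by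
      apply lintegral_lintegral_swap
      exact ((measurable_one.indicator hAmeas)).aemeasurable
    have hlow : ENNReal.ofReal (C₂ * ρ^d) * volume K ≤ ∫⁻ y, ∫⁻ z, f y z ∂ν ∂volume := by
      rw [← lintegral_indicator_const hKc.measurableSet]
      refine lintegral_mono fun y => ?_
      by_cases hy : y ∈ K
      · rw [indicator_of_mem hy]
        have hin : (fun z => f y z) = (closedBall y ρ).indicator 1 := by
          funext z
          by_cases hz : z ∈ closedBall y ρ
          · rw [indicator_of_mem hz]
            have : (y, z) ∈ A := ⟨hy, by rw [dist_comm]; exact mem_closedBall.mp hz⟩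
            simp [hf, indicator_of_mem this]
          · rw [indicator_of_notMem hz]
            have : (y, z) ∉ A := by
              rintro ⟨-, hd⟩
              exact hz (mem_closedBall.mpr (by rwa [dist_comm]))
            simp [hf, indicator_of_notMem this]
        rw [hin, lintegral_indicator_one measurableSet_closedBall]
        have hsub : closedBall y ρ ⊆ B := by
          refine closedBall_subset_closedBall' ?_
          have : dist y x ≤ r := hKx hy
          linarith
        rw [hν, Measure.restrict_apply' (hB ▸ measurableSet_closedBall),
          inter_eq_self_of_subset_left hsub]
        exact h2 j y (hKS hy)
      · rw [indicator_of_notMem hy]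
        exact zero_le
    have hinner2 : ∀ z, ∫⁻ y, f y z ∂volume = volume (K ∩ closedBall z ρ) := by
      intro z
      have hin : (fun y => f y z) = (K ∩ closedBall z ρ).indicator 1 := by
        funext y
        by_cases hyz : y ∈ K ∩ closedBall z ρ
        · rw [indicator_of_mem hyz]
          have : (y, z) ∈ A := ⟨hyz.1, mem_closedBall.mp hyz.2⟩
          simp [hf, indicator_of_mem this]
        · rw [indicator_of_notMem hyz]
          have : (y, z) ∉ A := by
            rintro ⟨h1', h2'⟩
            exact hyz ⟨h1', mem_closedBall.mpr h2'⟩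
          simp [hf, indicator_of_notMem this]
      rw [hin, lintegral_indicator_one (hKc.measurableSet.inter measurableSet_closedBall)]
    have hup : ∫⁻ z, ∫⁻ y, f y z ∂volume ∂ν ≤ ENNReal.ofReal ((2*ρ)^n) * μ j T := by
      calc ∫⁻ z, ∫⁻ y, f y z ∂volume ∂ν
          ≤ ∫⁻ z, T.indicator (fun _ => ENNReal.ofReal ((2*ρ)^n)) z ∂ν := by
            refine lintegral_mono fun z => ?_
            rw [hinner2 z]
            by_cases hz : z ∈ T
            · rw [indicator_of_mem hz]
              refine le_trans (measure_mono inter_subset_right) ?_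
              rw [Real.volume_pi_closedBall z hρ0.le, Fintype.card_fin]
            · rw [indicator_of_notMem hz]
              have hemp : K ∩ closedBall z ρ = ∅ := by
                ext y
                simp only [mem_inter_iff, mem_closedBall, mem_empty_iff_false, iff_false, not_and]
                intro hyK hyz
                exact hz (mem_cthickening_of_dist_le z y ρ K hyK (by rwa [dist_comm]))
              simp [hemp]
        _ = ENNReal.ofReal ((2*ρ)^n) * ν T := lintegral_indicator_const hTmeas _
        _ ≤ ENNReal.ofReal ((2*ρ)^n) * μ j T := by
            refine mul_le_mul_right ?_ _
            rw [hν, Measure.restrict_apply hTmeas]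
            exact measure_mono inter_subset_left
    have hchain : μ j T ≤ ENNReal.ofReal ((2:ℝ)^((n:ℝ)-d)) ^ (j - k) * μ k T := by
      have hTS : μ j T = μ j (T ∩ S) := (DReg.support_eq h0 _ _).symm
      have hTS' : μ k (T ∩ S) ≤ μ k T := measure_mono inter_subset_left
      have hcu := DReg.chainUp h3 k (j-k) (T ∩ S) inter_subset_right
        (hTmeas.inter hS.measurableSet)
      rw [Nat.add_sub_cancel' hkj] at hcu
      rw [hTS]
      exact hcu.trans (mul_le_mul_right hTS' _)
    have coefeq : ENNReal.ofReal ((2*ρ)^n) * ENNReal.ofReal ((2:ℝ)^((n:ℝ)-d)) ^ (j-k)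
        = ENNReal.ofReal (C₂ * ρ^d) * c := by
      rw [← ENNReal.ofReal_pow (by positivity), ← ENNReal.ofReal_mul (by positivity),
          hc, ← ENNReal.ofReal_mul (by positivity)]
      congr 1
      rw [hρdef]
      have h2 : (0:ℝ) < 2 := two_pos
      have e1 : (2:ℝ)^(-(j:ℤ)) = (2:ℝ)^((-(j:ℝ))) := by
        rw [← Real.rpow_intCast 2 (-(j:ℤ))]; push_cast; ring_nf
      rw [e1, mul_pow, ← Real.rpow_natCast ((2:ℝ)^((-(j:ℝ)))) n, ← Real.rpow_natCast 2 n,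
        ← Real.rpow_natCast ((2:ℝ)^((n:ℝ)-d)) (j-k),
        ← Real.rpow_mul h2.le, ← Real.rpow_mul h2.le, ← Real.rpow_mul h2.le,
        Nat.cast_sub hkj]
      have hrr : (2:ℝ)^((-(j:ℝ))*d) * C₂ * ((2:ℝ)^((n:ℝ))/C₂ * (2:ℝ)^((d-(n:ℝ))*(k:ℝ)))
          = (2:ℝ)^((-(j:ℝ))*d) * ((2:ℝ)^((n:ℝ)) * (2:ℝ)^((d-(n:ℝ))*(k:ℝ))) := by
        field_simp
      rw [mul_comm C₂, hrr]
      simp only [← Real.rpow_add h2]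
      congr 1
      ring
    have main : ENNReal.ofReal (C₂ * ρ^d) * volume K
        ≤ ENNReal.ofReal (C₂ * ρ^d) * (c * μ k T) := by
      calc ENNReal.ofReal (C₂ * ρ^d) * volume K
          ≤ ∫⁻ y, ∫⁻ z, f y z ∂ν ∂volume := hlow
        _ = ∫⁻ z, ∫⁻ y, f y z ∂volume ∂ν := hswap
        _ ≤ ENNReal.ofReal ((2*ρ)^n) * μ j T := hup
        _ ≤ ENNReal.ofReal ((2*ρ)^n) * (ENNReal.ofReal ((2:ℝ)^((n:ℝ)-d)) ^ (j-k) * μ k T) :=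
            mul_le_mul_right hchain _
        _ = (ENNReal.ofReal ((2*ρ)^n) * ENNReal.ofReal ((2:ℝ)^((n:ℝ)-d)) ^ (j-k)) * μ k T := by
            ring
        _ = (ENNReal.ofReal (C₂ * ρ^d) * c) * μ k T := by rw [coefeq]
        _ = ENNReal.ofReal (C₂ * ρ^d) * (c * μ k T) := by ring
    have hne0 : ENNReal.ofReal (C₂ * ρ^d) ≠ 0 := by
      simp only [ne_eq, ENNReal.ofReal_eq_zero, not_le]
      positivity
    exact (ENNReal.mul_le_mul_iff_right hne0 ENNReal.ofReal_ne_top).mp main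
  -- pass to the limit
  have hfin2 : μ k (cthickening ((2:ℝ)^(-(j₁:ℤ))) K) ≠ ∞ :=
    ne_top_of_le_ne_top (hfin1 k x) (measure_mono (hsubB j₁ le_rfl))
  have hseq : Filter.Tendsto (fun j : ℕ => (2:ℝ)^(-(j:ℤ))) Filter.atTop (nhds 0) := by
    have : (fun j : ℕ => (2:ℝ)^(-(j:ℤ))) = fun j : ℕ => ((1:ℝ)/2)^j := by
      funext j; rw [zpow_neg, zpow_natCast, ← inv_pow, ← one_div]
    rw [this]
    exact tendsto_pow_atTop_nhds_zero_of_lt_one (by norm_num) (by norm_num)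
  have htend : Filter.Tendsto (fun j : ℕ => c * μ k (cthickening ((2:ℝ)^(-(j:ℤ))) K))
      Filter.atTop (nhds (c * μ k K)) := by
    refine ENNReal.Tendsto.const_mul ?_ (Or.inr ENNReal.ofReal_ne_top)
    exact (tendsto_measure_cthickening_of_isClosed
      ⟨(2:ℝ)^(-(j₁:ℤ)), by positivity, hfin2⟩ hKc.isClosed).comp hseq
  refine ge_of_tendsto htend ?_
  filter_upwards [Filter.eventually_ge_atTop (max k j₁)] with j hj
  exact step j (le_trans (le_max_left _ _) hj) (le_trans (le_max_right _ _) hj)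

/-- Key estimate for Borel subsets. -/
lemma DReg.key_borel (hd0 : 0 ≤ d) (hdn : d ≤ n) (hS : IsClosed S)
    (hC₁ : 0 < C₁) (hC₂ : 0 < C₂) (hreg : IsDRegularSystem n d S μ C₁ C₂)
    (x : Fin n → ℝ) (r : ℝ) (hr0 : 0 < r) (hr1 : r < 1)
    (G : Set (Fin n → ℝ)) (hGm : MeasurableSet G) (hG : G ⊆ closedBall x r ∩ S) (k : ℕ) :
    volume G ≤ ENNReal.ofReal ((2:ℝ)^n/C₂ * (2:ℝ)^((d-(n:ℝ))*k)) * μ k G := by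
  have hGfin : volume G ≠ ∞ := by
    refine ne_top_of_le_ne_top ?_ (measure_mono (hG.trans inter_subset_left))
    rw [Real.volume_pi_closedBall x hr0.le]
    exact ENNReal.ofReal_ne_top
  refine ENNReal.le_of_forall_pos_le_add fun ε hε _ => ?_
  obtain ⟨K, hKG, hKc, hKlt⟩ := hGm.exists_isCompact_lt_add hGfin
    (ε := (ε : ℝ≥0∞)) (by exact_mod_cast hε.ne')
  have hKQ := hKG.trans hG
  calc volume G ≤ volume K + ε := hKlt.le
    _ ≤ ENNReal.ofReal ((2:ℝ)^n/C₂ * (2:ℝ)^((d-(n:ℝ))*k)) * μ k K + ε := by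
        refine add_le_add_left ?_ _
        exact DReg.key_compact hd0 hdn hS hC₁ hC₂ hreg x r hr0 hr1 K hKc
          (hKQ.trans inter_subset_right) (hKQ.trans inter_subset_left) k
    _ ≤ ENNReal.ofReal ((2:ℝ)^n/C₂ * (2:ℝ)^((d-(n:ℝ))*k)) * μ k G + ε :=
        add_le_add_left (mul_le_mul_right (measure_mono hKG) _) _

/-- The real coefficient identity used in the final assembly. -/
lemma DReg.real_coef (n k : ℕ) (d C₁ C₂ : ℝ) (hC₂ : 0 < C₂) :
    (2:ℝ)^n/C₂ * (2:ℝ)^((d-(n:ℝ))*(k:ℕ)) * ((2:ℝ)^((n:ℝ)-d) * (C₁ * ((2:ℝ)^(-(k:ℤ)+1))^d))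
      = (2:ℝ)^n*C₁/C₂ * (2*(2:ℝ)^(-(k:ℤ)))^n := by
  have h2 : (0:ℝ) < 2 := two_pos
  have m : ∀ a b : ℝ, (2:ℝ)^a*(2:ℝ)^b = (2:ℝ)^(a+b) := fun a b => (Real.rpow_add h2 a b).symm
  have e1 : (2:ℝ)^(-(k:ℤ)+1) = (2:ℝ)^((1-(k:ℝ))) := by
    rw [← Real.rpow_intCast 2 (-(k:ℤ)+1)]; push_cast; ring_nf
  have e2 : (2:ℝ)^(-(k:ℤ)) = (2:ℝ)^((-(k:ℝ))) := by
    rw [← Real.rpow_intCast 2 (-(k:ℤ))]; push_cast; ring_nf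
  rw [e1, e2, mul_pow, ← Real.rpow_natCast ((2:ℝ)^((-(k:ℝ)))) n, ← Real.rpow_natCast 2 n,
    ← Real.rpow_mul h2.le, ← Real.rpow_mul h2.le]
  rw [show (2:ℝ)^((n:ℝ))/C₂ * (2:ℝ)^((d-(n:ℝ))*((k:ℕ):ℝ)) * ((2:ℝ)^((n:ℝ)-d) * (C₁ * (2:ℝ)^((1-(k:ℝ))*d)))
      = C₁/C₂ * (((2:ℝ)^((n:ℝ)) * (2:ℝ)^((d-(n:ℝ))*((k:ℕ):ℝ))) * ((2:ℝ)^((n:ℝ)-d) * (2:ℝ)^((1-(k:ℝ))*d))) from by ring,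
    m, m, m]
  rw [show (2:ℝ)^((n:ℝ))*C₁/C₂ * ((2:ℝ)^((n:ℝ)) * (2:ℝ)^((-(k:ℝ))*(n:ℝ)))
      = C₁/C₂ * (((2:ℝ)^((n:ℝ)) * (2:ℝ)^((n:ℝ))) * (2:ℝ)^((-(k:ℝ))*(n:ℝ))) from by ring, m, m]
  congr 1
  ring

end Aux

theorem statement14 (n : ℕ) (d : ℝ) (hd0 : 0 ≤ d) (hdn : d ≤ n)
    (S : Set (Fin n → ℝ)) (hS : IsClosed S)
    (μ : ℕ → Measure (Fin n → ℝ)) (C₁ C₂ : ℝ) (hC₁ : 0 < C₁) (hC₂ : 0 < C₂)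
    (hreg : IsDRegularSystem n d S μ C₁ C₂) :
    ∃ C : ℝ, 0 < C ∧ ∀ x ∈ S, ∀ r : ℝ, 0 < r → r < 1 →
      ∀ k : ℕ, (2:ℝ)^(-(k:ℤ)) ≤ r → r < (2:ℝ)^(-(k:ℤ)+1) →
        ∀ G : Set (Fin n → ℝ), MeasurableSet G → G ⊆ closedBall x r ∩ S →
          volume G / volume (closedBall x r)
            ≤ ENNReal.ofReal C * (μ k G / μ k (closedBall x r ∩ S)) := by
  obtain ⟨h0, h1, h2, h3⟩ := hreg
  refine ⟨(2:ℝ)^n*C₁/C₂, by positivity, ?_⟩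
  intro x hx r hr0 hr1 k hk1 hk2 G hGm hG
  -- `k ≥ 1`
  obtain ⟨m, rfl⟩ : ∃ m, k = m + 1 := by
    rcases Nat.eq_zero_or_pos k with hk0 | hk0
    · exfalso; rw [hk0] at hk1; norm_num at hk1; linarith
    · exact ⟨k - 1, by omega⟩
  set k := m + 1
  set Q' := closedBall x r ∩ S with hQ'
  have hQ'meas : MeasurableSet Q' := measurableSet_closedBall.inter hS.measurableSet
  -- upper bound on `μ k Q'`
  have hrm : r ≤ (2:ℝ)^(-(m:ℤ)) := by
    refine le_of_lt (lt_of_lt_of_le hk2 (le_of_eq ?_))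
    congr 1
    simp only [k]
    push_cast
    ring
  have hupQ : μ k Q' ≤ ENNReal.ofReal ((2:ℝ)^((n:ℝ)-d) * (C₁ * r ^ d)) := by
    have hcu := DReg.chainUp h3 m 1 Q' inter_subset_right hQ'meas
    have hm1 : μ m Q' ≤ ENNReal.ofReal (C₁ * r ^ d) :=
      le_trans (measure_mono inter_subset_left) (h1 m x r hr0 hrm)
    calc μ k Q' ≤ ENNReal.ofReal ((2:ℝ)^((n:ℝ)-d)) ^ 1 * μ m Q' := hcu
      _ ≤ ENNReal.ofReal ((2:ℝ)^((n:ℝ)-d)) ^ 1 * ENNReal.ofReal (C₁ * r ^ d) :=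
          mul_le_mul_right hm1 _
      _ = ENNReal.ofReal ((2:ℝ)^((n:ℝ)-d) * (C₁ * r ^ d)) := by
          rw [pow_one, ← ENNReal.ofReal_mul (by positivity)]
  -- lower bound on `μ k Q'`
  have hlowQ : ENNReal.ofReal (C₂ * ((2:ℝ)^(-(k:ℤ)))^d) ≤ μ k Q' := by
    refine le_trans (h2 k x hx) ?_
    rw [hQ', DReg.support_eq h0]
    exact measure_mono (closedBall_subset_closedBall hk1)
  have hQ'0 : μ k Q' ≠ 0 := by
    refine (lt_of_lt_of_le ?_ hlowQ).ne'
    exact ENNReal.ofReal_pos.mpr (by positivity)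
  have hQ'top : μ k Q' ≠ ∞ := ne_top_of_le_ne_top ENNReal.ofReal_ne_top hupQ
  -- volume of the cube
  have hvQ : volume (closedBall x r) = ENNReal.ofReal ((2*r)^n) := by
    rw [Real.volume_pi_closedBall x hr0.le, Fintype.card_fin]
  have hvQ0 : volume (closedBall x r) ≠ 0 := by
    rw [hvQ]
    exact (ENNReal.ofReal_pos.mpr (by positivity)).ne'
  have hvQtop : volume (closedBall x r) ≠ ∞ := by rw [hvQ]; exact ENNReal.ofReal_ne_top
  -- reduce to a product inequality
  rw [ENNReal.div_le_iff hvQ0 hvQtop]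
  have hprod : volume G * μ k Q' ≤ (ENNReal.ofReal ((2:ℝ)^n*C₁/C₂) * μ k G)
      * volume (closedBall x r) := by
    have hkey := DReg.key_borel hd0 hdn hS hC₁ hC₂ ⟨h0, h1, h2, h3⟩ x r hr0 hr1 G hGm hG k
    calc volume G * μ k Q'
        ≤ (ENNReal.ofReal ((2:ℝ)^n/C₂ * (2:ℝ)^((d-(n:ℝ))*k)) * μ k G)
          * ENNReal.ofReal ((2:ℝ)^((n:ℝ)-d) * (C₁ * r ^ d)) := mul_le_mul' hkey hupQ
      _ = ENNReal.ofReal ((2:ℝ)^n/C₂ * (2:ℝ)^((d-(n:ℝ))*k)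
            * ((2:ℝ)^((n:ℝ)-d) * (C₁ * r ^ d))) * μ k G := by
          rw [mul_right_comm, ← ENNReal.ofReal_mul (by positivity)]
      _ ≤ ENNReal.ofReal ((2:ℝ)^n*C₁/C₂ * (2*r)^n) * μ k G := by
          refine mul_le_mul_left (ENNReal.ofReal_le_ofReal ?_) _
          calc (2:ℝ)^n/C₂ * (2:ℝ)^((d-(n:ℝ))*k) * ((2:ℝ)^((n:ℝ)-d) * (C₁ * r ^ d))
              ≤ (2:ℝ)^n/C₂ * (2:ℝ)^((d-(n:ℝ))*k)
                * ((2:ℝ)^((n:ℝ)-d) * (C₁ * ((2:ℝ)^(-(k:ℤ)+1)) ^ d)) := by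
                have hrd : r ^ d ≤ ((2:ℝ)^(-(k:ℤ)+1)) ^ d :=
                  Real.rpow_le_rpow hr0.le hk2.le hd0
                have hb : (0:ℝ) ≤ (2:ℝ)^n/C₂ * (2:ℝ)^((d-(n:ℝ))*k) := by positivity
                have hc : (0:ℝ) ≤ (2:ℝ)^((n:ℝ)-d) := by positivity
                exact mul_le_mul_of_nonneg_left
                  (mul_le_mul_of_nonneg_left (mul_le_mul_of_nonneg_left hrd hC₁.le) hc) hb
            _ = (2:ℝ)^n*C₁/C₂ * (2*(2:ℝ)^(-(k:ℤ)))^n := DReg.real_coef n k d C₁ C₂ hC₂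
            _ ≤ (2:ℝ)^n*C₁/C₂ * (2*r)^n := by
                refine mul_le_mul_of_nonneg_left ?_ (by positivity)
                exact pow_le_pow_left₀ (by positivity) (by linarith) n
      _ = (ENNReal.ofReal ((2:ℝ)^n*C₁/C₂) * μ k G) * volume (closedBall x r) := by
          rw [hvQ, ENNReal.ofReal_mul (by positivity)]; ring
  calc volume G = volume G * μ k Q' / μ k Q' := by
        exact (ENNReal.eq_div_iff hQ'0 hQ'top).mpr (mul_comm _ _)
      _ ≤ (ENNReal.ofReal ((2:ℝ)^n*C₁/C₂) * μ k G) * volume (closedBall x r) / μ k Q' :=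
        ENNReal.div_le_div_right hprod _
      _ = ENNReal.ofReal ((2:ℝ)^n*C₁/C₂) * (μ k G / μ k Q') * volume (closedBall x r) := by
        simp only [div_eq_mul_inv]; ring
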